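/- Let G be a graph with a fixed orientation of its edges, let P = v₀v₁…v_n be a path in G, and let f : V(G) → L be entire on P with f(v₀) ≠ 0 and f(v_n) ≠ 0. Suppose g : V(G) → L satisfies: g(v) = f(v) for every v ∈ V(P) with g(v) ≠ ⋆, and f(v) = 0 for every v ∈ V(P) with g(v) = ⋆. Let X = {v ∈ V(P) : g(v) = 0}. Then (1/2)·∫_P dg = Σ_{v ∈ X} λ_{P,f}(v). Furthermore, if g is holomorphic on P, then Σ_{v ∈ X} λ_{P,f}(v) is an integer. -/
import Mathlib


/-- A graph together with a fixed orientation of its edges: each edge `e` has a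
tail `e⁻` and a head `e⁺`. -/
structure OGraph : Type 1 where
  V : Type
  E : Type
  tail : E → V
  head : E → V

/-- The set of labels `L = {−1, 0, 1, ⋆}`. -/
inductive L : Type
  | neg | zero | pos | star
deriving DecidableEq

/-- The integer value of a label (with junk value `0` at `⋆`). -/
def L.toInt : L → ℤ
  | .neg => -1
  | .zero => 0
  | .pos => 1
  | .star => 0

/-- Two vertices are adjacent if some edge has them as its two endpoints. -/
def OGraph.Adj (G : OGraph) (u v : G.V) : Prop :=
  ∃ e : G.E, (G.tail e = u ∧ G.head e = v) ∨ (G.tail e = v ∧ G.head e = u)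

/-- `f` is continuous on `S`: no edge of `G` between vertices of `S` joins the
values `−1` and `1`. -/
def OContinuousOn (G : OGraph) (f : G.V → L) (S : Set G.V) : Prop :=
  ∀ u v : G.V, u ∈ S → v ∈ S → G.Adj u v → ¬(f u = L.neg ∧ f v = L.pos)

/-- `f` is holomorphic on `S`: it is continuous on `S` and moreover no edge of `G`
between vertices of `S` joins the values `0` and `⋆`. -/
def OHolomorphicOn (G : OGraph) (f : G.V → L) (S : Set G.V) : Prop :=
  OContinuousOn G f S ∧
  ∀ u v : G.V, u ∈ S → v ∈ S → G.Adj u v → ¬(f u = L.zero ∧ f v = L.star)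

/-- `f` is entire on `S`: it is continuous on `S` and takes no value `⋆` on `S`. -/
def OEntireOn (G : OGraph) (f : G.V → L) (S : Set G.V) : Prop :=
  OContinuousOn G f S ∧ ∀ v ∈ S, f v ≠ L.star

/-- The derivative `df : E(G) → ℤ`: `df(e) = f(e⁺) − f(e⁻)` if neither endpoint has value
`⋆`, and `df(e) = 0` otherwise. -/
def dF (G : OGraph) (f : G.V → L) (e : G.E) : ℤ :=
  if f (G.tail e) = L.star ∨ f (G.head e) = L.star then 0
  else (f (G.head e)).toInt - (f (G.tail e)).toInt

/-- A walk `(v₀, e₁, v₁, …, e_n, v_n)` in `G`, not necessarily respecting the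
orientation: each edge `e_i` joins `v_{i−1}` and `v_i` (in one of the two directions). -/
structure OWalk (G : OGraph) where
  n : ℕ
  v : Fin (n + 1) → G.V
  e : Fin n → G.E
  valid : ∀ i : Fin n,
    (G.tail (e i) = v i.castSucc ∧ G.head (e i) = v i.succ) ∨
    (G.head (e i) = v i.castSucc ∧ G.tail (e i) = v i.succ)

open scoped Classical in
/-- `I_W = Σ_i ε_i`, where `ε_i(e_i) = +1` if `v_i = e_i⁺`, `ε_i(e_i) = −1` if
`v_i = e_i⁻`, and `ε_i(e) = 0` for `e ≠ e_i`. -/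
noncomputable def OWalk.I {G : OGraph} (W : OWalk G) (e' : G.E) : ℤ :=
  ∑ i : Fin W.n,
    if W.e i = e' then (if G.head (W.e i) = W.v i.succ then 1 else -1) else 0

/-- `∫_W h = Σ_{e ∈ E(G)} I_W(e) · h(e)`. -/
noncomputable def intW {G : OGraph} [Fintype G.E] (W : OWalk G) (h : G.E → ℤ) : ℤ :=
  ∑ e : G.E, W.I e * h e

/-- `λ_{P,f}(v_i) = (f(v_{i+1}) − f(v_{i−1})) / 2` for interior vertices of the path `P`
(with junk value `0` at the two endpoints). -/
def lamP {G : OGraph} (P : OWalk G) (f : G.V → L) (i : Fin (P.n + 1)) : ℚ :=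
  if h : 0 < i.val ∧ i.val < P.n then
    (((f (P.v ⟨i.val + 1, by omega⟩)).toInt : ℚ) -
      ((f (P.v ⟨i.val - 1, by omega⟩)).toInt : ℚ)) / 2
  else 0

namespace Stmt8Aux

instance : Fintype L where
  elems := {L.neg, L.zero, L.pos, L.star}
  complete := by intro x; cases x <;> decide

def Vmap (G : OGraph) (P : OWalk G) (i : ℕ) : G.V := P.v ⟨min i P.n, by omega⟩

lemma Vmap_eq (G : OGraph) (P : OWalk G) (j : ℕ) (hj : j ≤ P.n) (h' : j < P.n + 1) :
    Vmap G P j = P.v ⟨j, h'⟩ := by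
  unfold Vmap; congr 1; exact Fin.ext (by simp [Nat.min_eq_left hj])

lemma Vmap_mem (G : OGraph) (P : OWalk G) (j : ℕ) : Vmap G P j ∈ Set.range P.v :=
  ⟨_, rfl⟩

set_option synthInstance.maxSize 2000 in
set_option maxHeartbeats 1000000 in
lemma keyL : ∀ a b c d : L, a ≠ L.star → b ≠ L.star →
    ¬(a = L.neg ∧ b = L.pos) → ¬(b = L.neg ∧ a = L.pos) →
    (c ≠ L.star → c = a) → (c = L.star → a = L.zero) →
    (d ≠ L.star → d = b) → (d = L.star → b = L.zero) →
    (if c = L.star ∨ d = L.star then (0:ℤ) else d.toInt - c.toInt)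
      = ((if c = L.zero then (1:ℤ) else 0) + (if d = L.zero then 1 else 0)) *
        (b.toInt - a.toInt) := by decide

set_option synthInstance.maxSize 2000 in
set_option maxHeartbeats 1000000 in
lemma keyPar : ∀ a b c d : L, a ≠ L.star → b ≠ L.star →
    (c ≠ L.star → c = a) → (c = L.star → a = L.zero) →
    (d ≠ L.star → d = b) → (d = L.star → b = L.zero) →
    ¬(c = L.zero ∧ d = L.star) → ¬(d = L.zero ∧ c = L.star) →
    ((if c = L.star ∨ d = L.star then (0:ℤ) else d.toInt - c.toInt)
      - ((b.toInt + (if d = L.star then 1 else 0))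
         - (a.toInt + (if c = L.star then 1 else 0)))) % 2 = 0 := by decide

/-- `DZ j` is the contribution of the `j`-th edge to `∫_P dg`. -/
def DZ (G : OGraph) (P : OWalk G) (g : G.V → L) (j : ℕ) : ℤ :=
  if g (Vmap G P j) = L.star ∨ g (Vmap G P (j+1)) = L.star then 0
  else (g (Vmap G P (j+1))).toInt - (g (Vmap G P j)).toInt

lemma intW_eq (G : OGraph) [Fintype G.E] (P : OWalk G)
    (hpath : Function.Injective P.v) (g : G.V → L) :
    intW P (dF G g) = ∑ j ∈ Finset.range P.n, DZ G P g j := by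
  classical
  have h1 : intW P (dF G g) = ∑ i : Fin P.n,
      (if G.head (P.e i) = P.v i.succ then (1:ℤ) else -1) * dF G g (P.e i) := by
    unfold intW OWalk.I
    simp_rw [Finset.sum_mul, ite_mul, zero_mul]
    rw [Finset.sum_comm]
    refine Finset.sum_congr rfl fun i _ => ?_
    rw [Finset.sum_ite_eq]
    simp
  rw [h1]
  have h2 : ∀ i : Fin P.n,
      (if G.head (P.e i) = P.v i.succ then (1:ℤ) else -1) * dF G g (P.e i)
        = DZ G P g i.val := by
    intro i
    have hcs : Vmap G P i.val = P.v i.castSucc := by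
      rw [Vmap_eq G P i.val (by omega) (by omega)]
      congr 1
    have hsc : Vmap G P (i.val + 1) = P.v i.succ := by
      rw [Vmap_eq G P (i.val + 1) (by omega) (by omega)]
      congr 1
    unfold DZ
    rw [hcs, hsc]
    rcases P.valid i with ⟨ht, hh⟩ | ⟨hh, ht⟩
    · rw [if_pos hh, one_mul]
      unfold dF
      rw [ht, hh]
    · have hne : P.v i.castSucc ≠ P.v i.succ := by
        intro h
        have := hpath h
        simp [Fin.ext_iff] at this
      have hne' : ¬ G.head (P.e i) = P.v i.succ := by rw [hh]; exact hne
      rw [if_neg hne']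
      unfold dF
      rw [ht, hh]
      by_cases h1 : g (P.v i.succ) = L.star <;> by_cases h2 : g (P.v i.castSucc) = L.star <;>
        simp [h1, h2] <;> ring
  calc ∑ i : Fin P.n, (if G.head (P.e i) = P.v i.succ then (1:ℤ) else -1) * dF G g (P.e i)
      = ∑ i : Fin P.n, DZ G P g i.val := Finset.sum_congr rfl fun i _ => h2 i
    _ = ∑ j ∈ Finset.range P.n, DZ G P g j := Fin.sum_univ_eq_sum_range _ _

lemma reindex (n : ℕ) (F c : ℕ → ℚ) (hc0 : c 0 = 0) (hcn : c n = 0) :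
    ∑ i ∈ Finset.range (n+1),
        c i * (if 0 < i ∧ i < n then (F (i+1) - F (i-1))/2 else 0)
      = ∑ j ∈ Finset.range n, (c j + c (j+1)) * ((F (j+1) - F j) / 2) := by
  rcases n with _ | m
  · simp
  set n := m + 1 with hnm
  have h1 : ∑ i ∈ Finset.range (n+1),
      c i * (if 0 < i ∧ i < n then (F (i+1) - F (i-1))/2 else 0)
      = ∑ i ∈ Finset.Ico 1 n, c i * ((F (i+1) - F (i-1))/2) := by
    rw [Finset.sum_congr rfl (fun i _ => mul_ite (0 < i ∧ i < n) (c i) _ 0)]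
    simp_rw [mul_zero]
    rw [Finset.sum_ite, Finset.sum_const_zero, add_zero]
    apply Finset.sum_congr _ (fun i _ => rfl)
    ext i
    simp only [Finset.mem_filter, Finset.mem_range, Finset.mem_Ico]
    omega
  rw [h1]
  have h2 : ∀ i ∈ Finset.Ico 1 n, c i * ((F (i+1) - F (i-1))/2)
      = c i * ((F (i+1) - F i)/2) + c i * ((F i - F (i-1))/2) := by
    intro i _; ring
  rw [Finset.sum_congr rfl h2, Finset.sum_add_distrib]
  have h3 : ∑ i ∈ Finset.Ico 1 n, c i * ((F (i+1) - F i)/2)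
      = ∑ j ∈ Finset.range n, c j * ((F (j+1) - F j)/2) := by
    apply Finset.sum_subset
    · intro x hx; simp at hx ⊢; omega
    · intro x hx hx'
      simp only [Finset.mem_range, Finset.mem_Ico] at hx hx'
      have : x = 0 := by omega
      rw [this, hc0, zero_mul]
  have h4 : ∑ i ∈ Finset.Ico 1 n, c i * ((F i - F (i-1))/2)
      = ∑ j ∈ Finset.range n, c (j+1) * ((F (j+1) - F j)/2) := by
    rw [Finset.sum_Ico_eq_sum_range]
    have hm : n - 1 = m := by omega
    rw [hm]
    rw [Finset.sum_range_succ, hcn, zero_mul, add_zero]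
    refine Finset.sum_congr rfl fun i _ => ?_
    have e1 : 1 + i = i + 1 := by omega
    have e2 : i + 1 - 1 = i := by omega
    rw [e1, e2]
  rw [h3, h4, ← Finset.sum_add_distrib]
  refine Finset.sum_congr rfl fun j _ => by ring

end Stmt8Aux

namespace Stmt8Aux

lemma adj_symm (G : OGraph) {u v : G.V} (h : G.Adj u v) : G.Adj v u := by
  obtain ⟨e, h⟩ := h; exact ⟨e, h.symm⟩

def FQ (G : OGraph) (P : OWalk G) (f : G.V → L) (j : ℕ) : ℚ :=
  ((f (Vmap G P j)).toInt : ℚ)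

def cQ (G : OGraph) (P : OWalk G) (g : G.V → L) (j : ℕ) : ℚ :=
  if g (Vmap G P j) = L.zero then 1 else 0

lemma lam_eq (G : OGraph) (P : OWalk G) (f g : G.V → L) (i : Fin (P.n + 1)) :
    (if g (P.v i) = L.zero then lamP P f i else 0)
      = cQ G P g i.val *
        (if 0 < i.val ∧ i.val < P.n
          then (FQ G P f (i.val+1) - FQ G P f (i.val-1))/2 else 0) := by
  have hv : P.v i = Vmap G P i.val := (Vmap_eq G P i.val (by omega) i.isLt).symm
  unfold cQ FQ lamP
  rw [← hv]
  by_cases hin : 0 < i.val ∧ i.val < P.n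
  · rw [dif_pos hin, if_pos hin]
    have e1 : Vmap G P (i.val+1) = P.v ⟨i.val+1, by omega⟩ :=
      Vmap_eq G P _ (by omega) (by omega)
    have e2 : Vmap G P (i.val-1) = P.v ⟨i.val-1, by omega⟩ :=
      Vmap_eq G P _ (by omega) (by omega)
    rw [e1, e2]
    split_ifs with hgz0
    · rw [one_mul]
    · rw [zero_mul]
  · rw [dif_neg hin, if_neg hin, mul_zero]
    split_ifs <;> rfl

end Stmt8Aux

open Stmt8Aux in
/-- Let `P = v₀v₁…v_n` be a path on which `f` is entire, with `f(v₀) ≠ 0 ≠ f(v_n)`.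
Suppose `g` agrees with `f` on vertices of `P` where `g ≠ ⋆`, while `f = 0` on vertices
of `P` where `g = ⋆`.  Let `X = {v ∈ V(P) : g(v) = 0}`.  Then
`(1/2)·∫_P dg = Σ_{v ∈ X} λ_{P,f}(v)`; moreover if `g` is holomorphic on `P` then this
sum is an integer. -/
theorem stmt_8 (G : OGraph) [Fintype G.E] (P : OWalk G)
    (hpath : Function.Injective P.v)
    (f g : G.V → L)
    (hent : OEntireOn G f (Set.range P.v))
    (h0 : f (P.v 0) ≠ L.zero) (hlast : f (P.v (Fin.last P.n)) ≠ L.zero)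
    (hg1 : ∀ i : Fin (P.n + 1), g (P.v i) ≠ L.star → g (P.v i) = f (P.v i))
    (hg2 : ∀ i : Fin (P.n + 1), g (P.v i) = L.star → f (P.v i) = L.zero) :
    (1 / 2 : ℚ) * (intW P (dF G g) : ℚ) =
      ∑ i ∈ Finset.univ.filter (fun i : Fin (P.n + 1) => g (P.v i) = L.zero), lamP P f i ∧
    (OHolomorphicOn G g (Set.range P.v) →
      ∃ z : ℤ,
        (∑ i ∈ Finset.univ.filter (fun i : Fin (P.n + 1) => g (P.v i) = L.zero),
          lamP P f i) = (z : ℚ)) := by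

  classical
  -- basic facts
  have hfstar : ∀ j : ℕ, f (Vmap G P j) ≠ L.star :=
    fun j => hent.2 _ (Vmap_mem G P j)
  have hgf : ∀ j : ℕ, g (Vmap G P j) ≠ L.star → g (Vmap G P j) = f (Vmap G P j) :=
    fun j => hg1 ⟨min j P.n, by omega⟩
  have hgz : ∀ j : ℕ, g (Vmap G P j) = L.star → f (Vmap G P j) = L.zero :=
    fun j => hg2 ⟨min j P.n, by omega⟩
  have hv0 : Vmap G P 0 = P.v 0 := by
    rw [Vmap_eq G P 0 (by omega) (by omega)]
    congr 1
  have hvn : Vmap G P P.n = P.v (Fin.last P.n) := by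
    rw [Vmap_eq G P P.n le_rfl (by omega)]
    rfl
  have hf0 : f (Vmap G P 0) ≠ L.zero := by rw [hv0]; exact h0
  have hfn : f (Vmap G P P.n) ≠ L.zero := by rw [hvn]; exact hlast
  have hgs0 : g (Vmap G P 0) ≠ L.star := fun h => hf0 (hgz 0 h)
  have hgsn : g (Vmap G P P.n) ≠ L.star := fun h => hfn (hgz P.n h)
  have hg00 : g (Vmap G P 0) ≠ L.zero := fun h => hf0 (by rw [← hgf 0 (by rw [h]; decide)]; exact h)
  have hg0n : g (Vmap G P P.n) ≠ L.zero :=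
    fun h => hfn (by rw [← hgf P.n (by rw [h]; decide)]; exact h)
  -- adjacency along the path
  have hadj : ∀ j, j < P.n → G.Adj (Vmap G P j) (Vmap G P (j+1)) := by
    intro j hj
    have hcs : P.v ((⟨j, hj⟩ : Fin P.n).castSucc) = Vmap G P j :=
      (Vmap_eq G P j (by omega) (by omega)).symm
    have hsc : P.v ((⟨j, hj⟩ : Fin P.n).succ) = Vmap G P (j+1) :=
      (Vmap_eq G P (j+1) (by omega) (by omega)).symm
    rcases P.valid ⟨j, hj⟩ with ⟨ht, hh⟩ | ⟨hh, ht⟩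
    · exact ⟨P.e ⟨j, hj⟩, Or.inl ⟨by rw [ht, hcs], by rw [hh, hsc]⟩⟩
    · exact ⟨P.e ⟨j, hj⟩, Or.inr ⟨by rw [ht, hsc], by rw [hh, hcs]⟩⟩
  have hcont : ∀ j, j < P.n →
      ¬(f (Vmap G P j) = L.neg ∧ f (Vmap G P (j+1)) = L.pos) ∧
      ¬(f (Vmap G P (j+1)) = L.neg ∧ f (Vmap G P j) = L.pos) := by
    intro j hj
    exact ⟨hent.1 _ _ (Vmap_mem G P j) (Vmap_mem G P (j+1)) (hadj j hj),
      hent.1 _ _ (Vmap_mem G P (j+1)) (Vmap_mem G P j) (adj_symm G (hadj j hj))⟩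
  -- per-edge identity
  have hDZ : ∀ j, j < P.n → DZ G P g j
      = ((if g (Vmap G P j) = L.zero then (1:ℤ) else 0)
          + (if g (Vmap G P (j+1)) = L.zero then 1 else 0)) *
        ((f (Vmap G P (j+1))).toInt - (f (Vmap G P j)).toInt) := by
    intro j hj
    exact keyL _ _ _ _ (hfstar j) (hfstar (j+1)) (hcont j hj).1 (hcont j hj).2
      (hgf j) (hgz j) (hgf (j+1)) (hgz (j+1))
  -- the main computation
  have hmain : (1 / 2 : ℚ) * (intW P (dF G g) : ℚ) =
      ∑ i ∈ Finset.univ.filter (fun i : Fin (P.n + 1) => g (P.v i) = L.zero),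
        lamP P f i := by
    rw [Finset.sum_filter]
    have hstep : ∀ i : Fin (P.n + 1),
        (if g (P.v i) = L.zero then lamP P f i else 0)
          = (fun k : ℕ => cQ G P g k *
              (if 0 < k ∧ k < P.n then (FQ G P f (k+1) - FQ G P f (k-1))/2 else 0)) i.val :=
      fun i => lam_eq G P f g i
    rw [Finset.sum_congr rfl (fun i _ => hstep i),
      Fin.sum_univ_eq_sum_range
        (fun k : ℕ => cQ G P g k *
          (if 0 < k ∧ k < P.n then (FQ G P f (k+1) - FQ G P f (k-1))/2 else 0)) (P.n+1)]
    rw [reindex P.n (FQ G P f) (cQ G P g) (by unfold cQ; rw [if_neg hg00])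
      (by unfold cQ; rw [if_neg hg0n])]
    rw [intW_eq G P hpath g]
    push_cast
    rw [Finset.mul_sum]
    refine Finset.sum_congr rfl fun j hj => ?_
    have hjn : j < P.n := Finset.mem_range.mp hj
    rw [hDZ j hjn]
    unfold cQ FQ
    by_cases hc : g (Vmap G P j) = L.zero <;>
      by_cases hd : g (Vmap G P (j+1)) = L.zero <;>
      simp [hc, hd] <;> ring
  refine ⟨hmain, fun hHol => ?_⟩
  -- parity argument
  set r : ℕ → ℤ := fun j => (f (Vmap G P j)).toInt +
    (if g (Vmap G P j) = L.star then 1 else 0) with hr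
  have hpar : ∀ j ∈ Finset.range P.n, (DZ G P g j - (r (j+1) - r j)) % 2 = 0 := by
    intro j hj
    have hjn : j < P.n := Finset.mem_range.mp hj
    have hhol1 : ¬(g (Vmap G P j) = L.zero ∧ g (Vmap G P (j+1)) = L.star) :=
      hHol.2 _ _ (Vmap_mem G P j) (Vmap_mem G P (j+1)) (hadj j hjn)
    have hhol2 : ¬(g (Vmap G P (j+1)) = L.zero ∧ g (Vmap G P j) = L.star) :=
      hHol.2 _ _ (Vmap_mem G P (j+1)) (Vmap_mem G P j) (adj_symm G (hadj j hjn))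
    exact keyPar _ _ _ _ (hfstar j) (hfstar (j+1)) (hgf j) (hgz j)
      (hgf (j+1)) (hgz (j+1)) hhol1 hhol2
  have htel : ∑ j ∈ Finset.range P.n, (r (j+1) - r j) = r P.n - r 0 :=
    Finset.sum_range_sub r P.n
  have heven1 : 2 ∣ (∑ j ∈ Finset.range P.n, DZ G P g j - (r P.n - r 0)) := by
    rw [← htel, ← Finset.sum_sub_distrib]
    exact Finset.dvd_sum fun j hj => Int.dvd_of_emod_eq_zero (hpar j hj)
  have hr0 : r 0 = 1 ∨ r 0 = -1 := by
    have h1 : r 0 = (f (Vmap G P 0)).toInt := by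
      simp only [hr]
      rw [if_neg hgs0, add_zero]
    rw [h1]
    cases hc : f (Vmap G P 0)
    · exact Or.inr rfl
    · exact absurd hc hf0
    · exact Or.inl rfl
    · exact absurd hc (hfstar 0)
  have hrn : r P.n = 1 ∨ r P.n = -1 := by
    have h1 : r P.n = (f (Vmap G P P.n)).toInt := by
      simp only [hr]
      rw [if_neg hgsn, add_zero]
    rw [h1]
    cases hc : f (Vmap G P P.n)
    · exact Or.inr rfl
    · exact absurd hc hfn
    · exact Or.inl rfl
    · exact absurd hc (hfstar P.n)
  have heven2 : 2 ∣ (r P.n - r 0) := by rcases hr0 with h | h <;> rcases hrn with h' | h' <;> omega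
  have heven : 2 ∣ ∑ j ∈ Finset.range P.n, DZ G P g j := by
    have := dvd_add heven1 heven2
    rwa [sub_add_cancel] at this
  obtain ⟨z, hz⟩ := heven
  refine ⟨z, ?_⟩
  rw [← hmain, intW_eq G P hpath g, hz]
  push_cast
  ring
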